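/- Let A ∈ ℝ^{n×n}. Suppose there exist positive scalars p_i and nonnegative scalars w_{ij}, v_{ij} (1 ≤ i,j ≤ n) such that for all i: -a_{ii} ≥ (w_{ii}+v_{ii})/(2p_i), for all j≠i: |a_{ij}| ≤ √(w_{ij} v_{ij})/p_i, and w_{ii} > Σ_{j≠i} w_{ij}, v_{ii} > Σ_{j≠i} v_{ji}. Then the comparison matrix M(A) (with M(A)_{ii} = -max(-a_{ii},0), M(A)_{ij} = |a_{ij}|) is Hurwitz. -/

import Mathlib

open Matrix Finset

/-- `A` is Hurwitz: every complex eigenvalue has negative real part. -/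
def IsHurwitz {n : Type*} [Fintype n] [DecidableEq n] (A : Matrix n n ℝ) : Prop :=
  ∀ μ ∈ spectrum ℂ (A.map (algebraMap ℝ ℂ)), μ.re < 0

/-- The comparison matrix of `A`. -/
def compMat {n : ℕ} (A : Matrix (Fin n) (Fin n) ℝ) : Matrix (Fin n) (Fin n) ℝ :=
  Matrix.of fun i j => if i = j then -max (-(A i i)) 0 else |A i j|

private lemma key_ineq {n : ℕ} (A : Matrix (Fin n) (Fin n) ℝ)
    (p : Fin n → ℝ) (w v : Fin n → Fin n → ℝ)
    (hp : ∀ i, 0 < p i)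
    (hw : ∀ i j, 0 ≤ w i j) (hv : ∀ i j, 0 ≤ v i j)
    (hdiag : ∀ i, -(A i i) ≥ (w i i + v i i) / (2 * p i))
    (hoff : ∀ i j, j ≠ i → |A i j| ≤ Real.sqrt (w i j * v i j) / p i)
    (hwdom : ∀ i, w i i > ∑ j ∈ Finset.univ.erase i, w i j)
    (hvdom : ∀ i, v i i > ∑ j ∈ Finset.univ.erase i, v j i)
    (y : Fin n → ℝ) (hy : ∀ i, 0 ≤ y i) (k : Fin n) (hk : 0 < y k) :
    ∑ i, ∑ j, p i * compMat A i j * (y j * y i) < 0 := by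
  have hBd : ∀ i, p i * compMat A i i ≤ -((w i i + v i i) / 2) := by
    intro i
    have h1 : (w i i + v i i) / (2 * p i) ≤ max (-(A i i)) 0 :=
      le_max_of_le_left (hdiag i)
    have hp' := hp i
    have hc : compMat A i i = -max (-(A i i)) 0 := by simp [compMat]
    rw [hc]
    rw [div_le_iff₀ (by positivity)] at h1
    nlinarith
  have step : ∀ i j, p i * compMat A i j * (y j * y i) ≤
      (if i = j then -((w i i + v i i) / 2) * y i ^ 2
        else (w i j * y i ^ 2 + v i j * y j ^ 2) / 2) := by
    intro i j
    by_cases h : i = j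
    · subst h
      simp only [if_pos rfl, if_true]
      have h2 := mul_le_mul_of_nonneg_right (hBd i) (mul_nonneg (hy i) (hy i))
      nlinarith [h2]
    · simp only [if_neg h]
      have hB : compMat A i j = |A i j| := by simp [compMat, h]
      have h1 : p i * compMat A i j ≤ Real.sqrt (w i j * v i j) := by
        rw [hB]
        calc p i * |A i j| ≤ p i * (Real.sqrt (w i j * v i j) / p i) :=
              mul_le_mul_of_nonneg_left (hoff i j (Ne.symm h)) (hp i).le
          _ = Real.sqrt (w i j * v i j) := by
              rw [mul_div_assoc']
              exact mul_div_cancel_left₀ _ (hp i).ne'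
      have hs : Real.sqrt (w i j * v i j) = Real.sqrt (w i j) * Real.sqrt (v i j) :=
        Real.sqrt_mul (hw i j) _
      have h2 : Real.sqrt (w i j * v i j) * (y j * y i)
          ≤ (w i j * y i ^ 2 + v i j * y j ^ 2) / 2 := by
        rw [hs]
        nlinarith [sq_nonneg (Real.sqrt (w i j) * y i - Real.sqrt (v i j) * y j),
          Real.sq_sqrt (hw i j), Real.sq_sqrt (hv i j),
          Real.sqrt_nonneg (w i j), Real.sqrt_nonneg (v i j), hy i, hy j]
      calc p i * compMat A i j * (y j * y i)
          ≤ Real.sqrt (w i j * v i j) * (y j * y i) :=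
            mul_le_mul_of_nonneg_right h1 (mul_nonneg (hy j) (hy i))
        _ ≤ _ := h2
  have hsum : ∑ i, ∑ j, p i * compMat A i j * (y j * y i)
      ≤ ∑ i, ∑ j, (if i = j then -((w i i + v i i) / 2) * y i ^ 2
          else (w i j * y i ^ 2 + v i j * y j ^ 2) / 2) :=
    Finset.sum_le_sum fun i _ => Finset.sum_le_sum fun j _ => step i j
  refine hsum.trans_lt ?_
  have split : ∀ i : Fin n, ∑ j, (if i = j then -((w i i + v i i) / 2) * y i ^ 2
      else (w i j * y i ^ 2 + v i j * y j ^ 2) / 2)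
      = -((w i i + v i i) / 2) * y i ^ 2
        + ∑ j ∈ Finset.univ.erase i, (w i j * y i ^ 2 + v i j * y j ^ 2) / 2 := by
    intro i
    rw [← Finset.add_sum_erase Finset.univ _ (Finset.mem_univ i)]
    congr 1
    · simp
    · exact Finset.sum_congr rfl fun j hj => by
        rw [if_neg (Ne.symm (Finset.ne_of_mem_erase hj))]
  simp only [split]
  have row : ∀ (f : Fin n → ℝ) (i : Fin n),
      ∑ j ∈ Finset.univ.erase i, f j
        = ∑ j, if j ∈ Finset.univ.erase i then f j else 0 := by
    intro f i
    rw [Finset.sum_ite_mem, Finset.univ_inter]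
  have swap : ∑ i, ∑ j ∈ Finset.univ.erase i, v i j * y j ^ 2
      = ∑ i, (∑ j ∈ Finset.univ.erase i, v j i) * y i ^ 2 := by
    calc ∑ i, ∑ j ∈ Finset.univ.erase i, v i j * y j ^ 2
        = ∑ i, ∑ j, (if j ∈ Finset.univ.erase i then v i j * y j ^ 2 else 0) :=
          Finset.sum_congr rfl fun i _ => row _ i
      _ = ∑ j, ∑ i, (if j ∈ Finset.univ.erase i then v i j * y j ^ 2 else 0) :=
          Finset.sum_comm
      _ = ∑ j, ∑ i ∈ Finset.univ.erase j, v i j * y j ^ 2 := by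
          refine Finset.sum_congr rfl fun j _ => ?_
          simp only [Finset.mem_erase, Finset.mem_univ, and_true]
          rw [← Finset.sum_filter, Finset.filter_ne]
      _ = ∑ i, (∑ j ∈ Finset.univ.erase i, v j i) * y i ^ 2 :=
          Finset.sum_congr rfl fun j _ => (Finset.sum_mul _ _ _).symm
  have e1 : ∀ i : Fin n, ∑ j ∈ Finset.univ.erase i, (w i j * y i ^ 2 + v i j * y j ^ 2) / 2
      = ((∑ j ∈ Finset.univ.erase i, w i j) * y i ^ 2
          + ∑ j ∈ Finset.univ.erase i, v i j * y j ^ 2) / 2 := by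
    intro i
    rw [← Finset.sum_div, Finset.sum_add_distrib, ← Finset.sum_mul]
  simp only [e1]
  have final : ∑ i : Fin n, (-((w i i + v i i) / 2) * y i ^ 2
      + ((∑ j ∈ Finset.univ.erase i, w i j) * y i ^ 2
          + ∑ j ∈ Finset.univ.erase i, v i j * y j ^ 2) / 2)
      = ∑ i : Fin n, ((((∑ j ∈ Finset.univ.erase i, w i j) - w i i)
          + ((∑ j ∈ Finset.univ.erase i, v j i) - v i i)) / 2) * y i ^ 2 := by
    have e2 : ∀ i : Fin n, -((w i i + v i i) / 2) * y i ^ 2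
        + ((∑ j ∈ Finset.univ.erase i, w i j) * y i ^ 2
            + ∑ j ∈ Finset.univ.erase i, v i j * y j ^ 2) / 2
        = ((((∑ j ∈ Finset.univ.erase i, w i j) - w i i) - v i i) / 2) * y i ^ 2
          + (∑ j ∈ Finset.univ.erase i, v i j * y j ^ 2) / 2 := fun i => by ring
    simp only [e2]
    rw [Finset.sum_add_distrib, ← Finset.sum_div, swap, Finset.sum_div,
      ← Finset.sum_add_distrib]
    exact Finset.sum_congr rfl fun i _ => by ring
  rw [final]
  have hneg : ∀ i : Fin n, (((∑ j ∈ Finset.univ.erase i, w i j) - w i i)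
      + ((∑ j ∈ Finset.univ.erase i, v j i) - v i i)) / 2 < 0 := by
    intro i
    have := hwdom i
    have := hvdom i
    linarith
  calc ∑ i : Fin n, ((((∑ j ∈ Finset.univ.erase i, w i j) - w i i)
          + ((∑ j ∈ Finset.univ.erase i, v j i) - v i i)) / 2) * y i ^ 2
      < ∑ _i : Fin n, (0 : ℝ) :=
        Finset.sum_lt_sum
          (fun i _ => mul_nonpos_of_nonpos_of_nonneg (hneg i).le (sq_nonneg _))
          ⟨k, Finset.mem_univ k, mul_neg_of_neg_of_pos (hneg k) (pow_pos hk 2)⟩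
    _ = 0 := Finset.sum_const_zero

theorem lin_cond_implies_comparison_hurwitz {n : ℕ} (A : Matrix (Fin n) (Fin n) ℝ)
    (p : Fin n → ℝ) (w v : Fin n → Fin n → ℝ)
    (hp : ∀ i, 0 < p i)
    (hw : ∀ i j, 0 ≤ w i j) (hv : ∀ i j, 0 ≤ v i j)
    (hdiag : ∀ i, -(A i i) ≥ (w i i + v i i) / (2 * p i))
    (hoff : ∀ i j, j ≠ i → |A i j| ≤ Real.sqrt (w i j * v i j) / p i)
    (hwdom : ∀ i, w i i > ∑ j ∈ Finset.univ.erase i, w i j)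
    (hvdom : ∀ i, v i i > ∑ j ∈ Finset.univ.erase i, v j i) :
    IsHurwitz (compMat A) := by
  intro μ hμ
  set B := compMat A with hBdef
  set Bc := B.map (algebraMap ℝ ℂ) with hBc
  have hμ' : μ ∈ spectrum ℂ (Matrix.toLinAlgEquiv' Bc) := by
    rwa [AlgEquiv.spectrum_eq]
  have hev : Module.End.HasEigenvalue (Matrix.toLinAlgEquiv' Bc) μ :=
    Module.End.HasEigenvalue.of_mem_spectrum hμ'
  obtain ⟨x, hx⟩ := hev.exists_hasEigenvector
  have hxv : Bc.mulVec x = μ • x := by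
    have h := hx.apply_eq_smul
    rwa [Matrix.toLinAlgEquiv'_apply] at h
  have hx0 : x ≠ 0 := hx.right
  obtain ⟨k, hk⟩ : ∃ k, x k ≠ 0 := Function.ne_iff.mp hx0
  set y : Fin n → ℝ := fun i => ‖x i‖ with hy
  have hynn : ∀ i, 0 ≤ y i := fun i => norm_nonneg _
  have hyk : 0 < y k := by simpa [hy] using norm_pos_iff.mpr hk
  have hP : 0 < ∑ i, p i * Complex.normSq (x i) := by
    apply Finset.sum_pos' (fun i _ => mul_nonneg (hp i).le (Complex.normSq_nonneg _))
    exact ⟨k, Finset.mem_univ k, mul_pos (hp k) (Complex.normSq_pos.2 hk)⟩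
  have hid : μ.re * ∑ i, p i * Complex.normSq (x i)
      = ∑ i, ∑ j, p i * B i j * (x j * (starRingEnd ℂ) (x i)).re := by
    have h1 : ∀ i, p i * (Bc.mulVec x i * (starRingEnd ℂ) (x i)).re
        = ∑ j, p i * B i j * (x j * (starRingEnd ℂ) (x i)).re := by
      intro i
      rw [Matrix.mulVec, dotProduct, Finset.sum_mul, Complex.re_sum,
        Finset.mul_sum]
      refine Finset.sum_congr rfl fun j _ => ?_
      simp [hBc, Matrix.map_apply, mul_assoc, Complex.re_ofReal_mul]
    have h2 : ∀ i, p i * (Bc.mulVec x i * (starRingEnd ℂ) (x i)).re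
        = μ.re * (p i * Complex.normSq (x i)) := by
      intro i
      rw [hxv]
      simp only [Pi.smul_apply, smul_eq_mul, mul_assoc, Complex.mul_conj]
      simp [Complex.re_ofReal_mul]
      ring
    calc μ.re * ∑ i, p i * Complex.normSq (x i)
        = ∑ i, μ.re * (p i * Complex.normSq (x i)) := Finset.mul_sum _ _ _
      _ = ∑ i, p i * (Bc.mulVec x i * (starRingEnd ℂ) (x i)).re :=
          Finset.sum_congr rfl fun i _ => (h2 i).symm
      _ = _ := Finset.sum_congr rfl fun i _ => h1 i
  have hbound : ∑ i, ∑ j, p i * B i j * (x j * (starRingEnd ℂ) (x i)).re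
      ≤ ∑ i, ∑ j, p i * B i j * (y j * y i) := by
    refine Finset.sum_le_sum fun i _ => Finset.sum_le_sum fun j _ => ?_
    by_cases h : i = j
    · subst h
      have : (x i * (starRingEnd ℂ) (x i)).re = y i * y i := by
        rw [Complex.mul_conj]
        simp [hy, Complex.sq_norm, Complex.normSq_eq_norm_sq, sq]
      rw [this]
    · have hBnn : 0 ≤ p i * B i j := by
        have : B i j = |A i j| := by simp [hBdef, compMat, h]
        rw [this]
        exact mul_nonneg (hp i).le (abs_nonneg _)
      refine mul_le_mul_of_nonneg_left ?_ hBnn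
      calc (x j * (starRingEnd ℂ) (x i)).re
            ≤ ‖x j * (starRingEnd ℂ) (x i)‖ := Complex.re_le_norm _
        _ = y j * y i := by simp [hy, _root_.map_mul]
  have hlt : μ.re * ∑ i, p i * Complex.normSq (x i) < 0 := by
    rw [hid]
    exact hbound.trans_lt
      (key_ineq A p w v hp hw hv hdiag hoff hwdom hvdom y hynn k hyk)
  by_contra hcon
  push_neg at hcon
  nlinarith
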